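/- Suppose n ≤ r. Then: (a) extensions are unique, i.e. if A, A' ∈ E_k(n,r) satisfy ρ(A) = ρ(A') then A = A'; equivalently (b) the restriction map ρ: E_k(n,r) → E_k(n,r-1) is injective; and (c) the zero matrix is the only element of E_k(n,r) whose restriction is zero. -/
import Mathlib


open Finset

/-- The value-type of a multi-index `i ∈ I(n,r)`, encoded as the equivalence
relation on places whose classes are the blocks `{α : i α = v}`. -/
def vt {n r : ℕ} (i : Fin r → Fin n) : Fin r → Fin r → Prop :=
  fun a b => i a = i b

/-- Condition (G): for each place `α` and each pair of multi-indices obtained by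
deleting place `α`, all row and column `α`-slice sums equal a common scalar. -/
def CondG (k : Type*) [CommRing k] (n r : ℕ)
    (A : Matrix (Fin r → Fin n) (Fin r → Fin n) k) : Prop :=
  ∀ (α : Fin r) (i j : Fin r → Fin n), ∃ b : k,
    (∀ y : Fin n, (∑ x : Fin n, A (Function.update i α x) (Function.update j α y)) = b) ∧
    (∀ x : Fin n, (∑ y : Fin n, A (Function.update i α x) (Function.update j α y)) = b)

/-- Condition (H): entries vanish when row and column indices have different value-types. -/
def CondH (k : Type*) [CommRing k] (n r : ℕ)
    (A : Matrix (Fin r → Fin n) (Fin r → Fin n) k) : Prop :=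
  ∀ i j : Fin r → Fin n, vt i ≠ vt j → A i j = 0

/-- Condition (S): invariance under simultaneous place permutation of rows and columns. -/
def CondS (k : Type*) [CommRing k] (n r : ℕ)
    (A : Matrix (Fin r → Fin n) (Fin r → Fin n) k) : Prop :=
  ∀ (σ : Equiv.Perm (Fin r)) (i j : Fin r → Fin n), A (i ∘ σ) (j ∘ σ) = A i j

/-- Membership in the centralizer algebra `E_k(n,r) = End_{P_r(n)}(V^{⊗r})`. -/
def MemE (k : Type*) [CommRing k] (n r : ℕ)
    (A : Matrix (Fin r → Fin n) (Fin r → Fin n) k) : Prop :=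
  CondG k n r A ∧ CondH k n r A ∧ CondS k n r A

/-- The restriction `ρ(A) ∈ Mat_{I(n,r-1)}(k)`: its `(p,q)`-entry is the slice sum
`Σ_x a^{p x}_{q 0}`, which for `A ∈ E_k(n,r)` is the common value of all slice
sums of `A` indexed by `p, q`. -/
def rho (k : Type*) [CommRing k] (n r : ℕ) [NeZero n]
    (A : Matrix (Fin (r+1) → Fin n) (Fin (r+1) → Fin n) k) :
    Matrix (Fin r → Fin n) (Fin r → Fin n) k :=
  Matrix.of fun p q => ∑ x : Fin n, A (Fin.snoc p x) (Fin.snoc q 0)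

/-- The `k`-module `E_k(n,r)^i_j` of special invariants: those `A ∈ E_k(n,r)` such
that `A s t ≠ 0` implies `Λ_i(s) = Λ_j(t)`. -/
def MemESpec (k : Type*) [CommRing k] (n r : ℕ) (i j : Fin n)
    (A : Matrix (Fin r → Fin n) (Fin r → Fin n) k) : Prop :=
  MemE k n r A ∧ ∀ s t : Fin r → Fin n, A s t ≠ 0 → ∀ α : Fin r, s α = i ↔ t α = j

/-- The `r`-th Kronecker power `P(w)^{⊗r}` of the permutation matrix of `w`. -/
def kron (k : Type*) [CommRing k] (n r : ℕ) (w : Equiv.Perm (Fin n)) :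
    Matrix (Fin r → Fin n) (Fin r → Fin n) k :=
  Matrix.of fun i j => if i = ⇑w ∘ j then 1 else 0

lemma update_last_eq_snoc {n r : ℕ} (g : Fin (r+1) → Fin n) (x : Fin n) :
    Function.update g (Fin.last r) x = Fin.snoc (Fin.init g) x := by
  funext β
  refine Fin.lastCases ?_ ?_ β
  · simp
  · intro k
    rw [Function.update_of_ne (Fin.castSucc_lt_last k).ne, Fin.snoc_castSucc]
    rfl

lemma slice_zero {k : Type*} [CommRing k] {n r : ℕ} [NeZero n]
    {A : Matrix (Fin (r+1) → Fin n) (Fin (r+1) → Fin n) k}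
    (hA : MemE k n (r+1) A) (h0 : rho k n r A = 0)
    (α : Fin (r+1)) (i j : Fin (r+1) → Fin n) (y : Fin n) :
    ∑ x : Fin n, A (Function.update i α x) (Function.update j α y) = 0 := by
  obtain ⟨hG, hH, hS⟩ := hA
  set σ : Equiv.Perm (Fin (r+1)) := Equiv.swap α (Fin.last r) with hσ
  have hσα : σ.symm α = Fin.last r := by
    simp [hσ, Equiv.symm_swap, Equiv.swap_apply_left]
  have key : ∀ (f : Fin (r+1) → Fin n) (v : Fin n),
      Function.update f α v ∘ σ = Function.update (f ∘ σ) (Fin.last r) v := by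
    intro f v
    rw [← hσα, Function.update_comp_equiv]
  obtain ⟨b, hb1, -⟩ := hG (Fin.last r) (i ∘ σ) (j ∘ σ)
  have hb0 : b = 0 := by
    have h := congrFun (congrFun h0 (Fin.init (i ∘ σ))) (Fin.init (j ∘ σ))
    have hr : rho k n r A (Fin.init (i ∘ σ)) (Fin.init (j ∘ σ)) = b := by
      rw [← hb1 0]
      simp only [rho, Matrix.of_apply]
      refine Finset.sum_congr rfl fun x _ => ?_
      rw [update_last_eq_snoc, update_last_eq_snoc]
    rw [hr] at h
    simpa using h
  calc ∑ x : Fin n, A (Function.update i α x) (Function.update j α y)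
      = ∑ x : Fin n, A (Function.update (i ∘ σ) (Fin.last r) x)
          (Function.update (j ∘ σ) (Fin.last r) y) := by
        refine Finset.sum_congr rfl fun x _ => ?_
        rw [← hS σ (Function.update i α x) (Function.update j α y), key, key]
    _ = b := hb1 y
    _ = 0 := hb0

lemma memE_rho_zero {k : Type*} [CommRing k] {n r : ℕ} [NeZero n] (hnr : n ≤ r + 1)
    (A : Matrix (Fin (r+1) → Fin n) (Fin (r+1) → Fin n) k)
    (hA : MemE k n (r+1) A) (h0 : rho k n r A = 0) : A = 0 := by
  have hH := hA.2.1
  ext i j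
  simp only [Matrix.zero_apply]
  by_cases hvt : vt i = vt j
  swap
  · exact hH i j hvt
  -- choose a good place α
  obtain ⟨α, hwit⟩ : ∃ α : Fin (r+1),
      ∀ x : Fin n, x ≠ i α → vt (Function.update i α x) ≠ vt j := by
    by_cases hinj : Function.Injective i
    · -- i is bijective since n ≤ r+1
      have hcard : Fintype.card (Fin (r+1)) = Fintype.card (Fin n) := by
        have h1 : r + 1 ≤ n := by
          simpa using Fintype.card_le_of_injective i hinj
        simp [le_antisymm h1 hnr]
      have hsurj : Function.Surjective i :=
        ((Fintype.bijective_iff_injective_and_card i).2 ⟨hinj, hcard⟩).2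
      refine ⟨0, fun x hx hcon => ?_⟩
      obtain ⟨γ, hγ⟩ := hsurj x
      have hγ0 : γ ≠ (0 : Fin (r+1)) := by
        rintro rfl; exact hx hγ.symm
      have h1 : vt (Function.update i 0 x) 0 γ := by
        show Function.update i 0 x 0 = Function.update i 0 x γ
        rw [Function.update_self, Function.update_of_ne hγ0, hγ]
      have h2 : vt j 0 γ := by
        rw [← hcon]; exact h1
      have h3 : vt i 0 γ := by rw [hvt]; exact h2
      exact hx ((h3.trans hγ).symm)
    · rw [Function.not_injective_iff] at hinj
      obtain ⟨a, b, hab, hne⟩ := hinj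
      refine ⟨a, fun x hx hcon => ?_⟩
      have h3 : vt j a b := by
        rw [← hvt]; exact hab
      have h1 : vt (Function.update i a x) a b := by
        rw [hcon]; exact h3
      have h2 : Function.update i a x a = Function.update i a x b := h1
      rw [Function.update_self, Function.update_of_ne (Ne.symm hne)] at h2
      exact hx (h2.trans hab.symm)
  have hs := slice_zero hA h0 α i j (j α)
  rw [Function.update_eq_self] at hs
  have hsingle : ∑ x : Fin n, A (Function.update i α x) j
      = A (Function.update i α (i α)) j := by
    refine Finset.sum_eq_single_of_mem (i α) (Finset.mem_univ _) fun x _ hx => ?_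
    exact hH _ _ (hwit x hx)
  rw [hsingle, Function.update_eq_self] at hs
  exact hs

lemma memE_sub {k : Type*} [CommRing k] {n r : ℕ}
    {A B : Matrix (Fin r → Fin n) (Fin r → Fin n) k}
    (hA : MemE k n r A) (hB : MemE k n r B) : MemE k n r (A - B) := by
  obtain ⟨hGA, hHA, hSA⟩ := hA
  obtain ⟨hGB, hHB, hSB⟩ := hB
  refine ⟨?_, ?_, ?_⟩
  · intro α i j
    obtain ⟨a, ha1, ha2⟩ := hGA α i j
    obtain ⟨b, hb1, hb2⟩ := hGB α i j
    refine ⟨a - b, fun y => ?_, fun x => ?_⟩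
    · simp only [Matrix.sub_apply, Finset.sum_sub_distrib, ha1 y, hb1 y]
    · simp only [Matrix.sub_apply, Finset.sum_sub_distrib, ha2 x, hb2 x]
  · intro i j h
    simp [Matrix.sub_apply, hHA i j h, hHB i j h]
  · intro σ i j
    simp [Matrix.sub_apply, hSA σ i j, hSB σ i j]

lemma rho_sub {k : Type*} [CommRing k] {n r : ℕ} [NeZero n]
    (A B : Matrix (Fin (r+1) → Fin n) (Fin (r+1) → Fin n) k) :
    rho k n r (A - B) = rho k n r A - rho k n r B := by
  ext p q
  simp [rho, Matrix.sub_apply, Finset.sum_sub_distrib]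

/-- Suppose `n ≤ r` (here `r` is represented as `r+1`).  Then extensions are
unique: the restriction `ρ : E_k(n,r) → E_k(n,r-1)` is injective, and `0` is the
only element of `E_k(n,r)` whose restriction is zero. -/
theorem stmt_14 {k : Type*} [CommRing k] {n r : ℕ} [NeZero n] (hnr : n ≤ r + 1) :
    (∀ A B : Matrix (Fin (r+1) → Fin n) (Fin (r+1) → Fin n) k,
        MemE k n (r+1) A → MemE k n (r+1) B → rho k n r A = rho k n r B → A = B) ∧
    (∀ A : Matrix (Fin (r+1) → Fin n) (Fin (r+1) → Fin n) k,
        MemE k n (r+1) A → rho k n r A = 0 → A = 0) := by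
  constructor
  · intro A B hA hB hρ
    have h : A - B = 0 := by
      refine memE_rho_zero hnr (A - B) (memE_sub hA hB) ?_
      rw [rho_sub, hρ, sub_self]
    exact sub_eq_zero.mp h
  · exact fun A hA h0 => memE_rho_zero hnr A hA h0
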